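/- Let t₀ < T and 0 < a ≤ b. Let (u_k) be a sequence of measurable functions u_k : (t₀,T) → ℝ with u_k(t) ∈ {0} ∪ [a,b] for almost all t. Suppose u_k converges weakly in L²(t₀,T) to ū, and sgn∘u_k converges in L¹(t₀,T) to a measurable function ᾱ : (t₀,T) → {0,1}, where sgn(x) := 1 if x > 0 and sgn(x) := 0 if x = 0. Then ᾱ = sgn∘ū almost everywhere on (t₀,T), and ū(t) ∈ {0} ∪ [a,b] for almost all t ∈ (t₀,T). -/

import Mathlib

open Filter MeasureTheory
open scoped Topology

/-- Lemma 4.3 / `lem:compatibility_limits` (scalar case): if admissible controls `u_k`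
converge weakly in `L²(t₀,T)` to `ū` and `sgn ∘ u_k` converges in `L¹(t₀,T)` to a
`{0,1}`-valued function `ᾱ`, then `ᾱ = sgn ∘ ū` a.e. and `ū` takes values in
`{0} ∪ [a,b]` a.e. -/
theorem compatibility_of_limits
    (t₀ T a b : ℝ) (ht : t₀ < T) (ha : 0 < a) (hab : a ≤ b)
    (μ : Measure ℝ) (hμ : μ = volume.restrict (Set.Ioo t₀ T))
    (u : ℕ → ℝ → ℝ) (ubar α : ℝ → ℝ)
    (hu_meas : ∀ k : ℕ, Measurable (u k)) (hubar_meas : Measurable ubar)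
    (hα_meas : Measurable α)
    -- the `u_k` are admissible: values in `{0} ∪ [a,b]` a.e.
    (hu_vals : ∀ k : ℕ, ∀ᵐ t ∂μ, u k t ∈ ({0} : Set ℝ) ∪ Set.Icc a b)
    -- `ᾱ` takes values in `{0,1}`
    (hα_vals : ∀ᵐ t ∂μ, α t = 0 ∨ α t = 1)
    -- `ū ∈ L²`
    (hubar_L2 : MemLp ubar 2 μ)
    -- weak convergence `u_k ⇀ ū` in `L²(t₀,T)`
    (hweak : ∀ g : ℝ → ℝ, MemLp g 2 μ →
      Tendsto (fun k : ℕ => ∫ t, u k t * g t ∂μ) atTop (𝓝 (∫ t, ubar t * g t ∂μ)))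
    -- convergence `sgn(u_k) → ᾱ` in `L¹(t₀,T)`
    (hsgn : Tendsto
      (fun k : ℕ => ∫ t, |(if 0 < u k t then (1 : ℝ) else 0) - α t| ∂μ)
      atTop (𝓝 0)) :
    (∀ᵐ t ∂μ, α t = (if 0 < ubar t then (1 : ℝ) else 0)) ∧
    (∀ᵐ t ∂μ, ubar t ∈ ({0} : Set ℝ) ∪ Set.Icc a b) := by
  have hfin : IsFiniteMeasure μ := by
    subst hμ
    exact ⟨by rw [Measure.restrict_apply_univ, Real.volume_Ioo]; exact ENNReal.ofReal_lt_top⟩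
  set s : ℕ → ℝ → ℝ := fun k t => if 0 < u k t then (1 : ℝ) else 0 with hs_def
  have hs_meas : ∀ k, Measurable (s k) := fun k =>
    Measurable.ite (measurableSet_lt measurable_const (hu_meas k)) measurable_const
      measurable_const
  have hs_bd : ∀ k, ∀ t, ‖s k t‖ ≤ 1 := by
    intro k t
    simp only [hs_def]; split <;> simp
  have hs_int : ∀ k, Integrable (s k) μ := fun k =>
    (integrable_const (1 : ℝ)).mono' (hs_meas k).aestronglyMeasurable
      (Filter.Eventually.of_forall (hs_bd k))
  have hα_int : Integrable α μ := by
    refine (integrable_const (1 : ℝ)).mono' hα_meas.aestronglyMeasurable ?_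
    filter_upwards [hα_vals] with t h
    rcases h with h | h <;> simp [h]
  have hubar_int : Integrable ubar μ := hubar_L2.integrable one_le_two
  have hu_int : ∀ k, Integrable (u k) μ := by
    intro k
    refine (integrable_const b).mono' (hu_meas k).aestronglyMeasurable ?_
    filter_upwards [hu_vals k] with t h
    rcases h with h | h
    · simp at h; simp [h, le_trans ha.le hab]
    · rw [Real.norm_eq_abs, abs_of_nonneg (le_trans ha.le h.1)]; exact h.2
  -- pointwise a.e. inequality  a * s k ≤ u k ≤ b * s k
  have hptwise : ∀ k, ∀ᵐ t ∂μ, a * s k t ≤ u k t ∧ u k t ≤ b * s k t := by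
    intro k
    filter_upwards [hu_vals k] with t h
    rcases h with h | h
    · simp only [Set.mem_singleton_iff] at h
      simp [hs_def, h, lt_irrefl]
    · have hpos : 0 < u k t := lt_of_lt_of_le ha h.1
      simp only [hs_def, if_pos hpos, mul_one]
      exact ⟨h.1, h.2⟩
  -- convergence of set integrals of s k to set integrals of α
  have hsconv : ∀ E : Set ℝ, MeasurableSet E →
      Tendsto (fun k => ∫ t in E, s k t ∂μ) atTop (𝓝 (∫ t in E, α t ∂μ)) := by
    intro E hE
    rw [← tendsto_sub_nhds_zero_iff]
    have hbound : ∀ k, ‖(∫ t in E, s k t ∂μ) - ∫ t in E, α t ∂μ‖ ≤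
        ∫ t, |s k t - α t| ∂μ := by
      intro k
      rw [← integral_sub ((hs_int k).restrict) (hα_int.restrict)]
      calc ‖∫ t in E, (s k t - α t) ∂μ‖ ≤ ∫ t in E, ‖s k t - α t‖ ∂μ :=
            norm_integral_le_integral_norm _
        _ ≤ ∫ t, ‖s k t - α t‖ ∂μ := by
            refine setIntegral_le_integral ((hs_int k).sub hα_int).norm ?_
            exact Filter.Eventually.of_forall fun t => norm_nonneg _
        _ = ∫ t, |s k t - α t| ∂μ := by simp [Real.norm_eq_abs]
    have := squeeze_zero (fun k => norm_nonneg _) hbound hsgn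
    exact tendsto_zero_iff_norm_tendsto_zero.2 this
  -- convergence of set integrals of u k to set integrals of ubar
  have huconv : ∀ E : Set ℝ, MeasurableSet E →
      Tendsto (fun k => ∫ t in E, u k t ∂μ) atTop (𝓝 (∫ t in E, ubar t ∂μ)) := by
    intro E hE
    have hg : MemLp (E.indicator (fun _ => (1 : ℝ))) 2 μ :=
      memLp_indicator_const 2 hE 1 (Or.inr (measure_ne_top μ E))
    have := hweak _ hg
    have heq : ∀ f : ℝ → ℝ, (∫ t, f t * (E.indicator (fun _ => (1:ℝ))) t ∂μ)
        = ∫ t in E, f t ∂μ := by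
      intro f
      rw [← integral_indicator hE]
      congr 1
      ext t
      by_cases h : t ∈ E <;> simp [Set.indicator_apply, h]
    simpa only [heq] using this
  -- the two set-integral inequalities
  have hkey : ∀ E : Set ℝ, MeasurableSet E →
      a * (∫ t in E, α t ∂μ) ≤ (∫ t in E, ubar t ∂μ) ∧
      (∫ t in E, ubar t ∂μ) ≤ b * (∫ t in E, α t ∂μ) := by
    intro E hE
    constructor
    · refine le_of_tendsto_of_tendsto' (((hsconv E hE).const_mul a)) (huconv E hE) ?_
      intro k
      rw [← integral_const_mul]
      refine integral_mono_ae ((hs_int k).restrict.const_mul a) ((hu_int k).restrict) ?_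
      exact (ae_restrict_of_ae (hptwise k)).mono fun t h => h.1
    · refine le_of_tendsto_of_tendsto' (huconv E hE) (((hsconv E hE).const_mul b)) ?_
      intro k
      rw [← integral_const_mul]
      refine integral_mono_ae ((hu_int k).restrict) ((hs_int k).restrict.const_mul b) ?_
      exact (ae_restrict_of_ae (hptwise k)).mono fun t h => h.2
  -- deduce a * α ≤ ubar ≤ b * α a.e.
  have hlow : ∀ᵐ t ∂μ, a * α t ≤ ubar t := by
    have h0 : 0 ≤ᵐ[μ] fun t => ubar t - a * α t := by
      refine ae_nonneg_of_forall_setIntegral_nonneg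
        (hubar_int.sub (hα_int.const_mul a)) ?_
      intro E hE _
      rw [integral_sub (hubar_int.restrict) ((hα_int.const_mul a).restrict),
        integral_const_mul]
      linarith [(hkey E hE).1]
    filter_upwards [h0] with t h
    simpa using h
  have hup : ∀ᵐ t ∂μ, ubar t ≤ b * α t := by
    have h0 : 0 ≤ᵐ[μ] fun t => b * α t - ubar t := by
      refine ae_nonneg_of_forall_setIntegral_nonneg
        ((hα_int.const_mul b).sub hubar_int) ?_
      intro E hE _
      rw [integral_sub ((hα_int.const_mul b).restrict) (hubar_int.restrict),
        integral_const_mul]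
      linarith [(hkey E hE).2]
    filter_upwards [h0] with t h
    simpa using sub_nonneg.mp h
  constructor
  · filter_upwards [hlow, hup, hα_vals] with t h1 h2 hv
    rcases hv with hv | hv
    · rw [hv] at h1 h2
      simp only [mul_zero] at h1 h2
      have : ubar t = 0 := le_antisymm h2 h1
      simp [hv, this]
    · rw [hv] at h1 h2
      simp only [mul_one] at h1 h2
      have : 0 < ubar t := lt_of_lt_of_le ha h1
      simp [hv, this]
  · filter_upwards [hlow, hup, hα_vals] with t h1 h2 hv
    rcases hv with hv | hv
    · rw [hv] at h1 h2
      simp only [mul_zero] at h1 h2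
      exact Or.inl (le_antisymm h2 h1)
    · rw [hv] at h1 h2
      simp only [mul_one] at h1 h2
      exact Or.inr ⟨h1, h2⟩
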